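/- Left multiplication by elements of 𝒱 on 𝒮 = ℍ⁴ satisfies the Clifford relation: for 𝒜 ∈ 𝒱 and Ψ ∈ ℍ⁴, 𝒜(𝒜Ψ) = h(𝒜,𝒜)Ψ, despite the failure of associativity being a non-issue since ℍ is associative. -/

import Mathlib

open Matrix

/-- The 2×2 hermitian quaternionic matrix `(t+x, y; y*, t-x)`. -/
noncomputable def qherm (t x : ℝ) (y : Quaternion ℝ) : Matrix (Fin 2) (Fin 2) (Quaternion ℝ) :=
  !![((t + x : ℝ) : Quaternion ℝ), y; star y, ((t - x : ℝ) : Quaternion ℝ)]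

/-- Trace reversal `Ã = A - (tr A)·1`. -/
noncomputable def qtilde (M : Matrix (Fin 2) (Fin 2) (Quaternion ℝ)) :
    Matrix (Fin 2) (Fin 2) (Quaternion ℝ) :=
  M - (Matrix.trace M) • (1 : Matrix (Fin 2) (Fin 2) (Quaternion ℝ))

/-- An element `(a·1, Ã; A, -a·1)` of the 7-dimensional Minkowski space
`𝒱 ⊆ ℍ[4]`, where `A = (t+x, y; y*, t-x) ∈ h₂(ℍ)`. -/
noncomputable def vmat (a t x : ℝ) (y : Quaternion ℝ) :
    Matrix (Fin 2 ⊕ Fin 2) (Fin 2 ⊕ Fin 2) (Quaternion ℝ) :=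
  Matrix.fromBlocks (a • 1) (qtilde (qherm t x y)) (qherm t x y) (-(a • 1))


lemma keyre (y : Quaternion ℝ) : (y * star y).re = Quaternion.normSq y := by
  rw [Quaternion.self_mul_star]; simp

lemma qtilde_qherm (t x : ℝ) (y : Quaternion ℝ) :
    qtilde (qherm t x y) = !![((x - t : ℝ) : Quaternion ℝ), y; star y, ((-x - t : ℝ) : Quaternion ℝ)] := by
  refine Matrix.ext fun i j => ?_
  fin_cases i <;> fin_cases j <;>
    simp [qtilde, qherm, Matrix.trace, Fin.sum_univ_two, Matrix.one_apply] <;>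
    · ext <;> simp <;> ring

lemma L1 (t x : ℝ) (y : Quaternion ℝ) :
    qtilde (qherm t x y) * qherm t x y =
      (((-(t ^ 2 - x ^ 2 - (y * star y).re) : ℝ) : Quaternion ℝ)) • 1 := by
  rw [qtilde_qherm, keyre]
  refine Matrix.ext fun i j => ?_
  fin_cases i <;> fin_cases j <;>
    simp [qherm, Matrix.mul_apply, Fin.sum_univ_two, Matrix.one_apply] <;>
    · ext <;>
        simp [Quaternion.normSq_def', ← Quaternion.coe_pow, Quaternion.re_mul, Quaternion.imI_mul,
          Quaternion.imJ_mul, Quaternion.imK_mul,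
          Quaternion.re_zero, Quaternion.imI_zero, Quaternion.imJ_zero, Quaternion.imK_zero] <;> ring

lemma L2 (t x : ℝ) (y : Quaternion ℝ) :
    qherm t x y * qtilde (qherm t x y) =
      (((-(t ^ 2 - x ^ 2 - (y * star y).re) : ℝ) : Quaternion ℝ)) • 1 := by
  rw [qtilde_qherm, keyre]
  refine Matrix.ext fun i j => ?_
  fin_cases i <;> fin_cases j <;>
    simp [qherm, Matrix.mul_apply, Fin.sum_univ_two, Matrix.one_apply] <;>
    · ext <;>
        simp [Quaternion.normSq_def', ← Quaternion.coe_pow, Quaternion.re_mul, Quaternion.imI_mul,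
          Quaternion.imJ_mul, Quaternion.imK_mul,
          Quaternion.re_zero, Quaternion.imI_zero, Quaternion.imJ_zero, Quaternion.imK_zero] <;> ring

lemma coe_smul_one (r : ℝ) :
    ((r : Quaternion ℝ)) • (1 : Matrix (Fin 2) (Fin 2) (Quaternion ℝ)) = r • 1 :=
  algebraMap_smul (Quaternion ℝ) r 1

lemma vmat_sq (a t x : ℝ) (y : Quaternion ℝ) :
    vmat a t x y * vmat a t x y =
      (((a ^ 2 + (-(t ^ 2 - x ^ 2 - (y * star y).re)) : ℝ) : Quaternion ℝ)) • 1 := by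
  rw [vmat, Matrix.fromBlocks_multiply, L1, L2,
    show (1 : Matrix (Fin 2 ⊕ Fin 2) (Fin 2 ⊕ Fin 2) (Quaternion ℝ)) = Matrix.fromBlocks 1 0 0 1
      from (Matrix.fromBlocks_one).symm, Matrix.fromBlocks_smul]
  rw [Matrix.fromBlocks_inj]
  refine ⟨?_, ?_, ?_, ?_⟩
  · simp only [coe_smul_one, smul_mul_assoc, mul_smul_comm, one_mul, smul_smul, add_smul, pow_two]
  · simp only [smul_mul_assoc, mul_neg, mul_smul_comm, mul_one, one_mul, neg_smul, smul_zero]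
    abel
  · simp only [smul_mul_assoc, neg_mul, mul_smul_comm, mul_one, one_mul, neg_smul, smul_zero]
    abel
  · simp only [coe_smul_one, neg_mul_neg, smul_mul_assoc, mul_smul_comm, one_mul, smul_smul,
      add_smul, pow_two]
    abel

/-- Left multiplication by vectors `𝒜 ∈ 𝒱` on spinors `Ψ ∈ 𝒮 = ℍ⁴` satisfies the
Clifford relation `𝒜(𝒜Ψ) = h(𝒜,𝒜)Ψ`. -/
theorem clifford_relation_dim7 (a t x : ℝ) (y : Quaternion ℝ)
    (Ψ : Fin 2 ⊕ Fin 2 → Quaternion ℝ) :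
    vmat a t x y *ᵥ (vmat a t x y *ᵥ Ψ) =
      (a ^ 2 + (-(t ^ 2 - x ^ 2 - (y * star y).re))) • Ψ := by
  rw [Matrix.mulVec_mulVec, vmat_sq, Matrix.smul_mulVec, Matrix.one_mulVec]
  exact algebraMap_smul (R := ℝ) (Quaternion ℝ) _ Ψ
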